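/- Let λ₃ = [4,2,2] and μ₄ = [5,3]. Then λ₃ is supermajorized by μ₄, but λ₃ does not stably embed into μ₄: there is no partition ν = [ν₁, …, ν_n] with λ₃×ν ↪ μ₄×ν. Hence supermajorization does not imply stable embeddability. -/

import Mathlib

/-- An integral partition: a finite (nonempty) multiset of positive integers. -/
def IsPartition (l : Multiset ℕ) : Prop := l ≠ 0 ∧ ∀ x ∈ l, 0 < x

/-- `Embeds l m` : the entries of `l` can be grouped and the groups assigned
bijectively (as a multiset) to the bins of `m`, each group fitting in its bin.
This is the bin-packing embedding `l ↪ m`. -/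
def Embeds (l m : Multiset ℕ) : Prop :=
  ∃ T : Multiset (Multiset ℕ × ℕ),
    (T.map Prod.fst).sum = l ∧ T.map Prod.snd = m ∧ ∀ q ∈ T, q.1.sum ≤ q.2

/-- The product of two partitions: all pairwise products of entries. -/
def mprod (l m : Multiset ℕ) : Multiset ℕ := l.bind fun a => m.map (a * ·)

/-- The `n`-fold product `l^{×n}`. -/
def prodPow (l : Multiset ℕ) : ℕ → Multiset ℕ
  | 0 => {1}
  | n + 1 => mprod l (prodPow l n)

/-- The `p`-norm of a partition: `(∑ λᵢ^p)^(1/p)`. -/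
noncomputable def pnorm (l : Multiset ℕ) (p : ℝ) : ℝ :=
  ((l.map fun a => (a : ℝ) ^ p).sum) ^ (1 / p)

/-- `l ⪯_S m` : for every positive `x`, the sum of the entries of `l` that
are `≥ x` is at most the corresponding sum for `m`. -/
def Supermajorized (l m : Multiset ℕ) : Prop :=
  ∀ x : ℕ, 0 < x →
    ((l.filter fun a => x ≤ a).sum ≤ (m.filter fun a => x ≤ a).sum)

/-- `l s↪ m` : there is a partition `ν` with `l×ν ↪ m×ν`. -/
def StablyEmbeds (l m : Multiset ℕ) : Prop :=
  ∃ ν : Multiset ℕ, IsPartition ν ∧ Embeds (mprod l ν) (mprod m ν)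

/-- `l b↪ m` : for every rational `ε > 0` there are positive integers `N, M`
with `M ≤ N(1+ε)` and `l^{×N} ↪ m^{×M}`. -/
def BulkEmbeds (l m : Multiset ℕ) : Prop :=
  ∀ ε : ℚ, 0 < ε → ∃ N M : ℕ, 0 < N ∧ 0 < M ∧ (M : ℚ) ≤ (N : ℚ) * (1 + ε) ∧
    Embeds (prodPow l N) (prodPow m M)

/-- Example: `λ₃ = [4,2,2]` is supermajorized by `μ₄ = [5,3]`, but `λ₃` does
not stably embed into `μ₄`: no partition `ν` satisfies `λ₃×ν ↪ μ₄×ν`. -/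
lemma sum_sum (S : Multiset (Multiset ℕ)) : S.sum.sum = (S.map Multiset.sum).sum := by
  induction S using Multiset.induction with
  | empty => simp
  | cons a s ih => simp [ih]

lemma mprod_sum (l ν : Multiset ℕ) : (mprod l ν).sum = l.sum * ν.sum := by
  induction l using Multiset.induction with
  | empty => simp [mprod]
  | cons a s ih =>
    simp only [mprod, Multiset.cons_bind, Multiset.sum_add, Multiset.sum_cons, add_mul] at *
    rw [ih]
    congr 1
    simpa using Multiset.sum_map_mul_left (s := ν) (a := a) (f := id)

theorem stmt_17 :
    Supermajorized ({4, 2, 2} : Multiset ℕ) ({5, 3} : Multiset ℕ) ∧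
    ¬ StablyEmbeds ({4, 2, 2} : Multiset ℕ) ({5, 3} : Multiset ℕ) := by
  constructor
  · intro x hx
    rcases le_or_gt x 5 with h | h
    · interval_cases x <;> decide
    · have h1 : Multiset.filter (fun a => x ≤ a) ({4,2,2} : Multiset ℕ) = 0 := by
        rw [Multiset.filter_eq_nil]; intro a ha; fin_cases ha <;> omega
      rw [h1]
      exact Nat.zero_le _
  · rintro ⟨ν, ⟨hν0, hνpos⟩, T, hfst, hsnd, hle⟩
    classical
    obtain ⟨a0, ha0⟩ := Multiset.exists_mem_of_ne_zero hν0
    have hP : ∃ m, ∃ a ∈ ν, ¬ 2^(m+1) ∣ a := by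
      refine ⟨a0, a0, ha0, fun hdvd => ?_⟩
      have h1 : a0 < 2^a0 := Nat.lt_two_pow_self
      have h2 : (2:ℕ)^a0 ≤ 2^(a0+1) := Nat.pow_le_pow_right (by norm_num) (by omega)
      have := Nat.le_of_dvd (hνpos a0 ha0) hdvd
      omega
    set k := Nat.find hP with hk
    obtain ⟨ν₀, hν₀m, hν₀nd⟩ := Nat.find_spec hP
    have hdvdall : ∀ a ∈ ν, 2^k ∣ a := by
      intro a ha
      rcases Nat.eq_zero_or_pos k with h0 | h0
      · simp [h0]
      · have := Nat.find_min hP (m := k - 1) (by omega)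
        push_neg at this
        have := this a ha
        rwa [Nat.sub_add_cancel h0] at this
    have hleft : ∀ x ∈ mprod ({4,2,2} : Multiset ℕ) ν, 2^(k+1) ∣ x := by
      intro x hxm
      rw [mprod, Multiset.mem_bind] at hxm
      obtain ⟨a, ha, hx⟩ := hxm
      rw [Multiset.mem_map] at hx
      obtain ⟨b, hb, rfl⟩ := hx
      obtain ⟨c, hc⟩ := hdvdall b hb
      have ha' : 2 ∣ a := by fin_cases ha <;> decide
      obtain ⟨d, hd⟩ := ha'
      exact ⟨d * c, by rw [hd, hc]; ring⟩
    have hsum : (T.map fun q : Multiset ℕ × ℕ => q.1.sum).sum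
        = (T.map fun q : Multiset ℕ × ℕ => q.2).sum := by
      have h1 : (T.map fun q : Multiset ℕ × ℕ => q.1.sum)
          = (T.map Prod.fst).map Multiset.sum := by rw [Multiset.map_map]; rfl
      have h2 : (T.map fun q : Multiset ℕ × ℕ => q.2) = T.map Prod.snd := rfl
      rw [h1, h2, ← sum_sum, hfst, hsnd, mprod_sum, mprod_sum]; congr 1
    have hexact : ∀ q ∈ T, q.1.sum = q.2 := by
      intro q hq
      by_contra hne
      have hlt : q.1.sum < q.2 := lt_of_le_of_ne (hle q hq) hne
      exact absurd hsum (ne_of_lt (Multiset.sum_lt_sum (s := T)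
        (f := fun q : Multiset ℕ × ℕ => q.1.sum) (g := fun q : Multiset ℕ × ℕ => q.2)
        (fun i hi => hle i hi) ⟨q, hq, hlt⟩))
    have hmem : (5 * ν₀) ∈ T.map Prod.snd := by
      rw [hsnd, mprod, Multiset.mem_bind]
      exact ⟨5, by simp, Multiset.mem_map_of_mem _ hν₀m⟩
    rw [Multiset.mem_map] at hmem
    obtain ⟨q, hq, hq2⟩ := hmem
    have hsub : q.1 ≤ (T.map Prod.fst).sum :=
      Multiset.single_le_sum (fun x _ => bot_le) _ (Multiset.mem_map_of_mem _ hq)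
    have hdvdsum : 2^(k+1) ∣ q.1.sum := by
      apply Multiset.dvd_sum
      intro x hxq
      exact hleft x (by rw [← hfst]; exact Multiset.mem_of_le hsub hxq)
    rw [hexact q hq, hq2] at hdvdsum
    have hdvdν : 2^(k+1) ∣ ν₀ := by
      have hcop : Nat.Coprime (2^(k+1)) 5 := Nat.Coprime.pow_left _ (by decide)
      exact hcop.dvd_of_dvd_mul_left hdvdsum
    exact hν₀nd hdvdν
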